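/- Let X be a real Banach space, (e_i)_{i∈I} a bounded family in X, and c_s ≥ 1 a constant such that for every n ∈ ℕ, every pair of n-tuples of pairwise distinct indices i₁,…,iₙ ∈ I and j₁,…,jₙ ∈ I, and all scalars λ₁,…,λₙ ∈ ℝ, one has ‖Σ_{k=1}^{n} λ_k e_{j_k}‖ ≤ c_s · ‖Σ_{k=1}^{n} λ_k e_{i_k}‖. If 0 is a cluster point of the family (e_i)_{i∈I} in the weak topology of X (i.e., every weak neighborhood of 0 contains e_i for infinitely many i ∈ I), then the family (e_i)_{i∈I} is uniformly weakly null: for every ε > 0 there exists N ∈ ℕ such that for every x* in the closed unit ball B_{X*} of X*, the set {i ∈ I : |x*(e_i)| > ε} has at most N elements. -/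

import Mathlib

open Filter

private lemma shift_bound {X : Type*} [NormedAddCommGroup X] [NormedSpace ℝ X]
    {I : Type*} (e : I → X) (cs : ℝ) (hcs0 : 0 ≤ cs)
    (hsymm : ∀ (n : ℕ) (i j : Fin n → I), Function.Injective i → Function.Injective j →
      ∀ lam : Fin n → ℝ, ‖∑ k, lam k • e (j k)‖ ≤ cs * ‖∑ k, lam k • e (i k)‖)
    (M : ℕ) (j : Fin M → I) (hj : Function.Injective j)
    (t : Fin M → ℝ) (ht : ∑ k, t k = 1) :
    ‖∑ m, e (j m)‖ ≤ M * cs * ‖∑ m, t m • e (j m)‖ := by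
  have hM : M ≠ 0 := by rintro rfl; simp at ht
  haveI : NeZero M := ⟨hM⟩
  have key : ∀ r : Fin M, ‖∑ m, t (m + r) • e (j m)‖ ≤ cs * ‖∑ k, t k • e (j k)‖ := by
    intro r
    set σ : Fin M ≃ Fin M := Equiv.addRight r with hσ
    have h1 : ∑ m, t (m + r) • e (j m) = ∑ k, t k • e (j (σ.symm k)) := by
      rw [← Equiv.sum_comp σ (fun k => t k • e (j (σ.symm k)))]
      simp [hσ]
    rw [h1]
    exact hsymm M j (fun k => j (σ.symm k)) hj (hj.comp σ.symm.injective) t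
  have h2 : ∑ m, e (j m) = ∑ r : Fin M, ∑ m, t (m + r) • e (j m) := by
    rw [Finset.sum_comm]
    have : ∀ m : Fin M, ∑ r : Fin M, t (m + r) • e (j m) = e (j m) := by
      intro m
      rw [← Finset.sum_smul]
      have : ∑ r : Fin M, t (m + r) = ∑ k, t k := Equiv.sum_comp (Equiv.addLeft m) t
      rw [this, ht, one_smul]
    simp_rw [this]
  calc ‖∑ m, e (j m)‖ = ‖∑ r : Fin M, ∑ m, t (m + r) • e (j m)‖ := by rw [← h2]
    _ ≤ ∑ r : Fin M, ‖∑ m, t (m + r) • e (j m)‖ := norm_sum_le _ _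
    _ ≤ ∑ _r : Fin M, cs * ‖∑ k, t k • e (j k)‖ := Finset.sum_le_sum fun r _ => key r
    _ = M * cs * ‖∑ m, t m • e (j m)‖ := by
        rw [Finset.sum_const, Finset.card_univ, Fintype.card_fin, nsmul_eq_mul, mul_assoc]

private lemma functional_lb {X : Type*} [NormedAddCommGroup X] [NormedSpace ℝ X]
    {I : Type*} (e : I → X) {ε : ℝ} (g : X →L[ℝ] ℝ) (hg : ‖g‖ ≤ 1)
    (M : ℕ) (i : Fin M → I) (hi : ∀ k, ε < g (e (i k))) :
    (M : ℝ) * ε ≤ ‖∑ k, e (i k)‖ := by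
  calc (M : ℝ) * ε = ∑ _k : Fin M, ε := by
        rw [Finset.sum_const, Finset.card_univ, Fintype.card_fin, nsmul_eq_mul]
    _ ≤ ∑ k, g (e (i k)) := Finset.sum_le_sum fun k _ => (hi k).le
    _ = g (∑ k, e (i k)) := (map_sum g _ _).symm
    _ ≤ |g (∑ k, e (i k))| := le_abs_self _
    _ ≤ ‖g‖ * ‖∑ k, e (i k)‖ := g.le_opNorm _
    _ ≤ 1 * ‖∑ k, e (i k)‖ := by
        exact mul_le_mul_of_nonneg_right hg (norm_nonneg _)
    _ = ‖∑ k, e (i k)‖ := one_mul _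


/-- Let `(e_i)_{i ∈ I}` be a bounded family in a real Banach space `X` which is
symmetric with constant `c_s ≥ 1` (any rearrangement over distinct indices changes norms of
linear combinations by a factor at most `c_s`). If `0` is a cluster point of the family in the
weak topology (every weak neighbourhood of `0` contains `e_i` for infinitely many `i`), then the
family is uniformly weakly null. -/
theorem statement13 {X : Type*} [NormedAddCommGroup X] [NormedSpace ℝ X] [CompleteSpace X]
    {I : Type*} (e : I → X) (hbdd : Bornology.IsBounded (Set.range e))
    (cs : ℝ) (hcs : 1 ≤ cs)
    (hsymm : ∀ (n : ℕ) (i j : Fin n → I), Function.Injective i → Function.Injective j →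
      ∀ lam : Fin n → ℝ, ‖∑ k, lam k • e (j k)‖ ≤ cs * ‖∑ k, lam k • e (i k)‖)
    (hcluster : ∀ U ∈ nhds (toWeakSpace ℝ X 0), {i : I | toWeakSpace ℝ X (e i) ∈ U}.Infinite) :
    ∀ ε : ℝ, 0 < ε → ∃ N : ℕ, ∀ f : X →L[ℝ] ℝ, ‖f‖ ≤ 1 →
      {i : I | ε < |f (e i)|}.encard ≤ (N : ℕ∞) := by
  intro ε hε
  by_contra hcon
  push_neg at hcon
  have hcs0 : (0:ℝ) < cs := lt_of_lt_of_le one_pos hcs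
  -- Step 1 : 0 is in the norm closure of the convex hull of the range
  have h0 : (0 : X) ∈ closure (convexHull ℝ (Set.range e)) := by
    have him := (convex_convexHull ℝ (Set.range e)).toWeakSpace_closure (𝕜 := ℝ)
    have hmem : toWeakSpace ℝ X 0 ∈
        closure (toWeakSpace ℝ X '' (convexHull ℝ (Set.range e))) := by
      rw [mem_closure_iff]
      intro U hUopen hU0
      obtain ⟨i, hi⟩ := (hcluster U (hUopen.mem_nhds hU0)).nonempty
      exact ⟨toWeakSpace ℝ X (e i), hi, ⟨e i, subset_convexHull ℝ _ ⟨i, rfl⟩, rfl⟩⟩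
    rw [← him] at hmem
    obtain ⟨y, hy, hy0⟩ := hmem
    rwa [← (toWeakSpace ℝ X).injective hy0]
  -- Step 2 : lower bound for sums of distinct vectors
  have lower : ∀ (M : ℕ) (j : Fin M → I), Function.Injective j →
      (M : ℝ) * ε ≤ cs * ‖∑ k, e (j k)‖ := by
    intro M j hj
    obtain ⟨f, hf1, hfcard⟩ := hcon (2 * M)
    set Sp : Set I := {i | ε < f (e i)} with hSp
    set Sm : Set I := {i | ε < (-f) (e i)} with hSm
    have hdis : (M : ℕ∞) ≤ Sp.encard ∨ (M : ℕ∞) ≤ Sm.encard := by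
      by_contra h
      push_neg at h
      have hsub : {i : I | ε < |f (e i)|} ⊆ Sp ∪ Sm := by
        intro i hi
        have hi' : ε < |f (e i)| := hi
        rcases lt_abs.mp hi' with h' | h'
        · exact Or.inl h'
        · exact Or.inr (by simpa [hSm] using h')
      have hle : {i : I | ε < |f (e i)|}.encard ≤ ((2 * M : ℕ) : ℕ∞) := by
        calc {i : I | ε < |f (e i)|}.encard ≤ (Sp ∪ Sm).encard := Set.encard_mono hsub
          _ ≤ Sp.encard + Sm.encard := Set.encard_union_le _ _
          _ ≤ (M : ℕ∞) + (M : ℕ∞) := add_le_add h.1.le h.2.le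
          _ = ((2 * M : ℕ) : ℕ∞) := by push_cast; ring
      exact absurd hle (not_le.mpr hfcard)
    have hkey : ∃ g : X →L[ℝ] ℝ, ‖g‖ ≤ 1 ∧ (M : ℕ∞) ≤ {i : I | ε < g (e i)}.encard := by
      rcases hdis with h | h
      · exact ⟨f, hf1, h⟩
      · exact ⟨-f, by simpa using hf1, h⟩
    obtain ⟨g, hg1, hgcard⟩ := hkey
    obtain ⟨T, hTsub, hTcard⟩ := Set.exists_subset_encard_eq hgcard
    have hTfin : T.Finite := Set.finite_of_encard_eq_coe hTcard
    have hFcard : Fintype.card hTfin.toFinset = M := by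
      rw [Fintype.card_coe]
      have := hTfin.encard_eq_coe_toFinset_card
      rw [hTcard] at this
      exact_mod_cast this.symm
    set σ := Fintype.equivFinOfCardEq hFcard with hσdef
    set i : Fin M → I := fun k => ((σ.symm k : hTfin.toFinset) : I) with hidef
    have hiinj : Function.Injective i :=
      Subtype.val_injective.comp σ.symm.injective
    have hival : ∀ k, ε < g (e (i k)) := by
      intro k
      have : (i k) ∈ T := hTfin.mem_toFinset.mp (σ.symm k).2
      exact hTsub this
    have h1 : (M : ℝ) * ε ≤ ‖∑ k, e (i k)‖ := functional_lb e g hg1 M i hival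
    have h2 : ‖∑ k, (fun _ => (1:ℝ)) k • e (i k)‖ ≤ cs * ‖∑ k, (fun _ => (1:ℝ)) k • e (j k)‖ :=
      hsymm M j i hj hiinj (fun _ => 1)
    simp only [one_smul] at h2
    exact h1.trans h2
  -- Step 3 : pick a convex combination of small norm and derive a contradiction
  have hδ : (0:ℝ) < ε / (2 * cs ^ 2) := by positivity
  obtain ⟨x, hx, hxnorm⟩ := Metric.mem_closure_iff.mp h0 _ hδ
  rw [dist_comm, dist_zero_right] at hxnorm
  rw [convexHull_eq_union_convexHull_finite_subsets] at hx
  simp only [Set.mem_iUnion] at hx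
  obtain ⟨F, hFsub, hxF⟩ := hx
  obtain ⟨w, hw0, hw1, hwsum⟩ := Finset.mem_convexHull'.mp hxF
  set M := F.card with hM
  set τ := F.equivFin with hτ
  -- indices for the points of F
  have hchoice : ∀ p : F, ∃ i : I, e i = (p : X) := fun p => hFsub p.2
  choose idx hidx using hchoice
  set j : Fin M → I := fun k => idx (τ.symm k) with hjdef
  have hjinj : Function.Injective j := by
    intro a b hab
    have h1 : ((τ.symm a : F) : X) = ((τ.symm b : F) : X) :=
      (hidx (τ.symm a)).symm.trans ((congrArg e hab).trans (hidx (τ.symm b)))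
    exact τ.symm.injective (Subtype.coe_injective h1)
  set t : Fin M → ℝ := fun k => w ((τ.symm k : F) : X) with htdef
  have hsum_t : ∑ k, t k = 1 := by
    have h1 : ∑ k, t k = ∑ p : F, w (p : X) :=
      Equiv.sum_comp τ.symm (fun p : F => w (p : X))
    rw [h1, Finset.sum_coe_sort F (fun y => w y), hw1]
  have hsum_x : ∑ k, t k • e (j k) = x := by
    calc ∑ k, t k • e (j k)
        = ∑ k, w ((τ.symm k : F) : X) • ((τ.symm k : F) : X) :=
          Finset.sum_congr rfl fun k _ => by
            show w ((τ.symm k : F) : X) • e (idx (τ.symm k)) = _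
            rw [hidx]
      _ = ∑ p : F, w (p : X) • (p : X) :=
          Equiv.sum_comp τ.symm (fun p : F => w (p : X) • (p : X))
      _ = ∑ y ∈ F, w y • y := Finset.sum_coe_sort F (fun y => w y • y)
      _ = x := hwsum
  -- combine
  have hMε : (M : ℝ) * ε ≤ cs * ‖∑ k, e (j k)‖ := lower M j hjinj
  have havg : ‖∑ m, e (j m)‖ ≤ M * cs * ‖∑ m, t m • e (j m)‖ :=
    shift_bound e cs hcs0.le hsymm M j hjinj t hsum_t
  rw [hsum_x] at havg
  have hMpos : 0 < M := Finset.card_pos.mpr (by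
    rcases F.eq_empty_or_nonempty with rfl | h
    · simp at hw1
    · exact h)
  have : (M : ℝ) * ε ≤ cs * (M * cs * ‖x‖) :=
    hMε.trans (mul_le_mul_of_nonneg_left havg hcs0.le)
  have hfin : ε ≤ cs ^ 2 * ‖x‖ := by
    have hMR : (0:ℝ) < M := by exact_mod_cast hMpos
    nlinarith
  have : ε < ε := by
    calc ε ≤ cs ^ 2 * ‖x‖ := hfin
      _ < cs ^ 2 * (ε / (2 * cs ^ 2)) := by
          apply mul_lt_mul_of_pos_left hxnorm (by positivity)
      _ = ε / 2 := by field_simp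
      _ < ε := by linarith
  exact absurd this (lt_irrefl ε)
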